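/- Let η : ℝ^{n-1} → ℝ be C¹ with |Dη(x')| ≤ C|x'|^{-(n+ε)} for |x'| ≥ 1 (n ∈ {2,3}, ε > 0), let S = graph(η) with upward unit normal n, and for r > 0 let ν be the outward unit normal along the boundary of the projection of S ∩ B_r onto ℝ^{n-1}. Then ∫_{∂B_r ∩ S} n·ν ds → 0 as r → ∞, where ds is the (n-2)-dimensional measure on the projected boundary curve. -/

import Mathlib

open MeasureTheory Real Filter

noncomputable section

abbrev Euc (n : ℕ) := EuclideanSpace ℝ (Fin n)

def lapl {n : ℕ} (f : Euc n → ℝ) (x : Euc n) : ℝ :=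
  ∑ i, fderiv ℝ (fun y => fderiv ℝ f y (EuclideanSpace.single i 1)) x (EuclideanSpace.single i 1)

def diverg {n : ℕ} (A : Euc n → Euc n) (x : Euc n) : ℝ :=
  ∑ i, fderiv ℝ A x (EuclideanSpace.single i 1) i

def kelvinInv {n : ℕ} (x : Euc n) : Euc n := (‖x‖ ^ 2)⁻¹ • x

def lastIdx (n : ℕ) (hn : 0 < n) : Fin n := ⟨n - 1, Nat.sub_lt hn Nat.one_pos⟩

def eLast (n : ℕ) (hn : 0 < n) : Euc n := EuclideanSpace.single (lastIdx n hn) 1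

def horiz {n : ℕ} (x : Euc n) : Euc (n - 1) :=
  WithLp.toLp 2 (fun i : Fin (n - 1) => x ⟨i.val, lt_of_lt_of_le i.isLt (Nat.sub_le n 1)⟩)

def vert {n : ℕ} (hn : 0 < n) (x : Euc n) : ℝ := x (lastIdx n hn)

def mkPt {n : ℕ} (x' : Euc (n - 1)) (t : ℝ) : Euc n :=
  WithLp.toLp 2 (fun j : Fin n => if h : (j : ℕ) < n - 1 then x' ⟨j, h⟩ else t)

lemma norm_gradient_eq {m : ℕ} (η : Euc m → ℝ) (y : Euc m) :
    ‖fderiv ℝ η y‖ = ‖gradient η y‖ := by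
  rw [gradient]
  exact (LinearIsometryEquiv.norm_map _ _).symm

lemma eta_bdd {m : ℕ} {ε C : ℝ} (hε : 0 < ε) (hC : 0 < C) {η : Euc m → ℝ}
    (hη : ContDiff ℝ 1 η)
    (hdecay : ∀ x' : Euc m, 1 ≤ ‖x'‖ → ‖gradient η x'‖ ≤ C * ‖x'‖ ^ (-(1+ε))) :
    ∃ M : ℝ, 0 < M ∧ ∀ x', |η x'| ≤ M := by
  obtain ⟨M₀, hM₀⟩ := (isCompact_closedBall (0:Euc m) 1).exists_bound_of_continuousOn
    hη.continuous.continuousOn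
  refine ⟨|M₀| + C/ε + 1, by positivity, fun x' => ?_⟩
  rcases le_or_gt ‖x'‖ 1 with hx | hx
  · have := hM₀ x' (by simpa [Metric.mem_closedBall, dist_eq_norm] using hx)
    calc |η x'| ≤ M₀ := this
      _ ≤ |M₀| + C/ε + 1 := by
        have : M₀ ≤ |M₀| := le_abs_self _
        have h2 : (0:ℝ) ≤ C/ε := by positivity
        linarith
  · set s := ‖x'‖ with hs
    have hs1 : 1 < s := hx
    have hs0 : s ≠ 0 := by positivity
    set u : Euc m := s⁻¹ • x' with hu
    have hunorm : ‖u‖ = 1 := by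
      rw [hu, norm_smul, norm_inv, Real.norm_eq_abs, abs_of_pos (by positivity : (0:ℝ) < s)]
      field_simp
      exact hs.symm
    have hsu : s • u = x' := by
      rw [hu, smul_smul, mul_inv_cancel₀ hs0, one_smul]
    have hderiv : ∀ t : ℝ, HasDerivAt (fun t => η (t • u)) (fderiv ℝ η (t • u) u) t := by
      intro t
      have h1 : HasDerivAt (fun t : ℝ => t • u) u t := by
        simpa using (hasDerivAt_id t).smul_const u
      exact ((hη.differentiable one_ne_zero (t • u)).hasFDerivAt.comp_hasDerivAt t h1)
    have hcont : Continuous fun t : ℝ => fderiv ℝ η (t • u) u := by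
      have h1 : Continuous fun t : ℝ => fderiv ℝ η (t • u) :=
        (hη.continuous_fderiv one_ne_zero).comp (by fun_prop)
      exact h1.clm_apply continuous_const
    have hftc : ∫ t in (1:ℝ)..s, fderiv ℝ η (t • u) u = η (s • u) - η ((1:ℝ) • u) :=
      intervalIntegral.integral_eq_sub_of_hasDerivAt (fun t _ => hderiv t)
        (hcont.intervalIntegrable 1 s)
    have hbound : ∀ t ∈ Set.uIoc (1:ℝ) s, ‖fderiv ℝ η (t • u) u‖ ≤ C * t ^ (-(1+ε)) := by
      intro t ht
      rw [Set.mem_uIoc] at ht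
      have ht1 : 1 ≤ t := by rcases ht with ⟨h1, _⟩ | ⟨_, h2⟩ <;> linarith [hs1]
      have htnorm : ‖t • u‖ = t := by
        rw [norm_smul, hunorm, mul_one, Real.norm_eq_abs, abs_of_pos (by linarith)]
      calc ‖fderiv ℝ η (t • u) u‖ ≤ ‖fderiv ℝ η (t • u)‖ * ‖u‖ :=
            ContinuousLinearMap.le_opNorm _ _
        _ = ‖gradient η (t • u)‖ := by rw [hunorm, mul_one, norm_gradient_eq]
        _ ≤ C * ‖t • u‖ ^ (-(1+ε)) := hdecay _ (by rw [htnorm]; exact ht1)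
        _ = C * t ^ (-(1+ε)) := by rw [htnorm]
    have hInt : ‖∫ t in (1:ℝ)..s, fderiv ℝ η (t • u) u‖ ≤
        |∫ t in (1:ℝ)..s, C * t ^ (-(1+ε))| := by
      apply intervalIntegral.norm_integral_le_abs_of_norm_le
      · exact (MeasureTheory.ae_restrict_iff' measurableSet_uIoc).2
          (Filter.Eventually.of_forall hbound)
      · apply ContinuousOn.intervalIntegrable
        apply ContinuousOn.mul continuousOn_const
        apply ContinuousOn.rpow_const (continuousOn_id)
        intro t ht
        left
        rw [Set.uIcc_of_le (le_of_lt hs1)] at ht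
        simp only [id_eq]
        exact ne_of_gt (by linarith [ht.1])
    have hval : ∫ t in (1:ℝ)..s, C * t ^ (-(1+ε)) = C * ((s ^ (-ε) - 1) / (-ε)) := by
      rw [intervalIntegral.integral_const_mul, integral_rpow]
      · norm_num
      · right
        constructor
        · intro h; apply hε.ne'; linarith [neg_eq_iff_eq_neg.mp h]
        · rw [Set.uIcc_of_le (le_of_lt hs1)]
          intro h; linarith [h.1]
    have hsle : s ^ (-ε) ≤ 1 := by
      rw [← Real.rpow_zero s]
      exact Real.rpow_le_rpow_of_exponent_le (le_of_lt hs1) (by linarith)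
    have hspos : (0:ℝ) < s ^ (-ε) := Real.rpow_pos_of_pos (by linarith) _
    have heq : (s ^ (-ε) - 1) / (-ε) = (1 - s ^ (-ε)) / ε := by
      rw [div_eq_div_iff (by linarith : (-ε) ≠ 0) hε.ne']
      ring
    have hvb : C * ((s ^ (-ε) - 1) / (-ε)) ≤ C / ε := by
      rw [heq]
      calc C * ((1 - s ^ (-ε)) / ε) ≤ C * (1 / ε) := by
            gcongr
            linarith
        _ = C / ε := by ring
    have hnn : 0 ≤ C * ((s ^ (-ε) - 1) / (-ε)) := by
      rw [heq]
      exact mul_nonneg hC.le (div_nonneg (by linarith) hε.le)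
    have hfin : |η x' - η u| ≤ C / ε := by
      have habs : |η x' - η u| = ‖∫ t in (1:ℝ)..s, (fderiv ℝ η (t • u)) u‖ := by
        rw [hftc, hsu, one_smul, Real.norm_eq_abs]
      rw [habs]
      refine hInt.trans ?_
      rw [hval, abs_of_nonneg hnn]
      exact hvb
    have hu1 : |η u| ≤ M₀ := by
      have := hM₀ u (by simp [Metric.mem_closedBall, dist_eq_norm, hunorm])
      simpa using this
    have habs2 : |η x'| ≤ |η u| + |η x' - η u| := by
      calc |η x'| = |η u + (η x' - η u)| := by ring_nf
        _ ≤ |η u| + |η x' - η u| := abs_add_le _ _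
    have := le_abs_self M₀
    linarith

section Ray

variable {m : ℕ} {η : Euc m → ℝ} {ε C M : ℝ}

lemma ray_hasDerivAt (hη : ContDiff ℝ 1 η) (u : Euc m) (t : ℝ) :
    HasDerivAt (fun t : ℝ => t^2 + η (t • u)^2)
      (2*t + 2 * η (t • u) * fderiv ℝ η (t • u) u) t := by
  have h1 : HasDerivAt (fun t : ℝ => t • u) u t := by
    simpa using (hasDerivAt_id t).smul_const u
  have h2 : HasDerivAt (fun t : ℝ => η (t • u)) (fderiv ℝ η (t • u) u) t :=
    (hη.differentiable one_ne_zero (t • u)).hasFDerivAt.comp_hasDerivAt t h1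
  have h3 := ((hasDerivAt_pow 2 t).fun_add (h2.fun_pow 2))
  refine h3.congr_deriv ?_
  ring

lemma ray_fderiv_bound (hC : 0 < C) (hε : 0 < ε)
    (hdecay : ∀ y : Euc m, 1 ≤ ‖y‖ → ‖gradient η y‖ ≤ C * ‖y‖ ^ (-(1+ε)))
    {u : Euc m} (hu : ‖u‖ = 1) {t : ℝ} (ht : 1 ≤ t) :
    |fderiv ℝ η (t • u) u| ≤ C / t := by
  rw [← Real.norm_eq_abs]
  have htnorm : ‖t • u‖ = t := by
    rw [norm_smul, hu, mul_one, Real.norm_eq_abs, abs_of_pos (by linarith)]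
  calc ‖(fderiv ℝ η (t • u)) u‖ ≤ ‖fderiv ℝ η (t • u)‖ * ‖u‖ :=
        ContinuousLinearMap.le_opNorm _ _
    _ = ‖gradient η (t • u)‖ := by rw [hu, mul_one, norm_gradient_eq]
    _ ≤ C * ‖t • u‖ ^ (-(1+ε)) := hdecay _ (by rw [htnorm]; exact ht)
    _ ≤ C * t ^ (-(1:ℝ)) := by
        rw [htnorm]
        exact mul_le_mul_of_nonneg_left
          (Real.rpow_le_rpow_of_exponent_le ht (by linarith)) hC.le
    _ = C / t := by rw [Real.rpow_neg_one]; ring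

lemma ray_growth (hη : ContDiff ℝ 1 η) (hC : 0 < C) (hε : 0 < ε) (hM0 : 0 ≤ M)
    (hM : ∀ x', |η x'| ≤ M)
    (hdecay : ∀ y : Euc m, 1 ≤ ‖y‖ → ‖gradient η y‖ ≤ C * ‖y‖ ^ (-(1+ε)))
    {u : Euc m} (hu : ‖u‖ = 1) {a b : ℝ} (ha : 2 + M*C ≤ a) (hab : a ≤ b) :
    (2 + M*C) * (b - a) ≤ (b^2 + η (b • u)^2) - (a^2 + η (a • u)^2) := by
  set t₀ : ℝ := 2 + M*C with ht₀
  have ht₀pos : 0 < t₀ := by positivity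
  have hmono : MonotoneOn (fun t : ℝ => (t^2 + η (t • u)^2) - t₀ * t) (Set.Ici t₀) := by
    apply monotoneOn_of_deriv_nonneg (convex_Ici t₀)
    · apply Continuous.continuousOn
      have hc : Continuous fun t : ℝ => η (t • u) :=
        hη.continuous.comp (continuous_id.smul continuous_const)
      exact ((continuous_pow 2).add (hc.pow 2)).sub (continuous_const.mul continuous_id)
    · intro t _
      have hd : HasDerivAt (fun t : ℝ => t ^ 2 + η (t • u) ^ 2 - t₀ * t)
          (2 * t + 2 * η (t • u) * fderiv ℝ η (t • u) u - t₀) t := by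
        simpa using (ray_hasDerivAt hη u t).fun_sub ((hasDerivAt_id t).const_mul t₀)
      exact hd.differentiableAt.differentiableWithinAt
    · intro t ht
      rw [interior_Ici] at ht
      have ht' : t₀ < t := ht
      have hd : HasDerivAt (fun t : ℝ => t ^ 2 + η (t • u) ^ 2 - t₀ * t)
          (2 * t + 2 * η (t • u) * fderiv ℝ η (t • u) u - t₀) t := by
        simpa using (ray_hasDerivAt hη u t).fun_sub ((hasDerivAt_id t).const_mul t₀)
      rw [hd.deriv]
      have hMC : 0 ≤ M * C := mul_nonneg hM0 hC.le
      have ht2 : (2:ℝ) ≤ t₀ := by rw [ht₀]; linarith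
      have htpos : (0:ℝ) < t := by linarith
      have hb := ray_fderiv_bound hC hε hdecay hu (t := t) (by linarith)
      have hb2 : |2 * η (t • u) * fderiv ℝ η (t • u) u| ≤ 2 * M * (C / t) := by
        rw [abs_mul, abs_mul, abs_two]
        have h1 := hM (t • u)
        have h2 := abs_nonneg (fderiv ℝ η (t • u) u)
        have h3 := abs_nonneg (η (t • u))
        have hCt : (0:ℝ) ≤ C / t := by positivity
        nlinarith
      have hct : 2 * M * (C / t) ≤ M * C := by
        rw [mul_div_assoc', div_le_iff₀ htpos]
        have hMC : 0 ≤ M * C := mul_nonneg hM0 hC.le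
        nlinarith
      have hnb := neg_abs_le (2 * η (t • u) * fderiv ℝ η (t • u) u)
      have hMC : 0 ≤ M * C := mul_nonneg hM0 hC.le
      have ht2 : (2:ℝ) ≤ t₀ := by rw [ht₀]; linarith
      nlinarith
  have := hmono (Set.mem_Ici.2 ha) (Set.mem_Ici.2 (ha.trans hab)) hab
  simp only [] at this
  linarith

lemma ray_unique (hη : ContDiff ℝ 1 η) (hC : 0 < C) (hε : 0 < ε) (hM0 : 0 ≤ M)
    (hM : ∀ x', |η x'| ≤ M)
    (hdecay : ∀ y : Euc m, 1 ≤ ‖y‖ → ‖gradient η y‖ ≤ C * ‖y‖ ^ (-(1+ε)))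
    {u : Euc m} (hu : ‖u‖ = 1) {a b : ℝ} (ha : 2 + M*C ≤ a) (hb : 2 + M*C ≤ b)
    (heq : a^2 + η (a • u)^2 = b^2 + η (b • u)^2) : a = b := by
  rcases le_total a b with h | h
  · by_contra hne
    have := ray_growth hη hC hε hM0 hM hdecay hu ha h
    rw [heq] at this
    have ht₀pos : (0:ℝ) < 2 + M*C := by positivity
    nlinarith [lt_of_le_of_ne h hne]
  · by_contra hne
    have := ray_growth hη hC hε hM0 hM hdecay hu hb h
    rw [heq] at this
    have ht₀pos : (0:ℝ) < 2 + M*C := by positivity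
    nlinarith [lt_of_le_of_ne h (Ne.symm hne)]

end Ray

lemma euc1_norm (x' : Euc 1) : ‖x'‖ = |x' 0| := by
  rw [EuclideanSpace.norm_eq]
  simp [Fin.sum_univ_one, Real.sqrt_sq_eq_abs]

lemma measure_A_le_two {η : Euc 1 → ℝ} (hη : ContDiff ℝ 1 η) {ε C M : ℝ}
    (hε : 0 < ε) (hC : 0 < C) (hM0 : 0 ≤ M) (hM : ∀ x', |η x'| ≤ M)
    (hdecay : ∀ y : Euc 1, 1 ≤ ‖y‖ → ‖gradient η y‖ ≤ C * ‖y‖ ^ (-(1+ε)))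
    {r : ℝ} (hr : ∀ x' : Euc 1, ‖x'‖^2 + η x'^2 = r^2 → 2 + M*C ≤ ‖x'‖) :
    μH[(0:ℝ)] {x' : Euc 1 | ‖x'‖^2 + η x'^2 = r^2} ≤ 2 := by
  set A := {x' : Euc 1 | ‖x'‖^2 + η x'^2 = r^2} with hA
  set e : Euc 1 := WithLp.toLp 2 (fun _ => 1) with he
  have henorm : ‖e‖ = 1 := by rw [euc1_norm]; norm_num [he]
  have hneg : ‖-e‖ = 1 := by rw [norm_neg]; exact henorm
  have hrep : ∀ x' : Euc 1, 0 ≤ x' 0 → (x' 0) • e = x' := by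
    intro x' _
    ext i
    have : i = 0 := Subsingleton.elim i 0
    subst this
    simp [he]
  have hrepn : ∀ x' : Euc 1, x' 0 ≤ 0 → (-(x' 0)) • (-e) = x' := by
    intro x' _
    ext i
    have : i = 0 := Subsingleton.elim i 0
    subst this
    simp [he]
  have hP : Set.Subsingleton (A ∩ {x' | 0 ≤ x' 0}) := by
    intro x hx y hy
    obtain ⟨hxA, hx0⟩ := hx
    obtain ⟨hyA, hy0⟩ := hy
    have hxn : ‖x‖ = x 0 := by rw [euc1_norm, abs_of_nonneg hx0]
    have hyn : ‖y‖ = y 0 := by rw [euc1_norm, abs_of_nonneg hy0]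
    have h1 : x 0 ^ 2 + η ((x 0) • e) ^ 2 = y 0 ^ 2 + η ((y 0) • e) ^ 2 := by
      rw [hrep x hx0, hrep y hy0, ← hxn, ← hyn, hxA, hyA]
    have := ray_unique hη hC hε hM0 hM hdecay henorm
      (by rw [← hxn]; exact hr x hxA) (by rw [← hyn]; exact hr y hyA) h1
    rw [← hrep x hx0, ← hrep y hy0, this]
  have hN : Set.Subsingleton (A ∩ {x' | x' 0 ≤ 0}) := by
    intro x hx y hy
    obtain ⟨hxA, hx0⟩ := hx
    obtain ⟨hyA, hy0⟩ := hy
    have hxn : ‖x‖ = -(x 0) := by rw [euc1_norm, abs_of_nonpos hx0]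
    have hyn : ‖y‖ = -(y 0) := by rw [euc1_norm, abs_of_nonpos hy0]
    have h1 : (-(x 0)) ^ 2 + η ((-(x 0)) • (-e)) ^ 2
        = (-(y 0)) ^ 2 + η ((-(y 0)) • (-e)) ^ 2 := by
      rw [hrepn x hx0, hrepn y hy0, ← hxn, ← hyn, hxA, hyA]
    have := ray_unique hη hC hε hM0 hM hdecay hneg
      (by rw [← hxn]; exact hr x hxA) (by rw [← hyn]; exact hr y hyA) h1
    rw [← hrepn x hx0, ← hrepn y hy0, this]
  have hcover : A ⊆ (A ∩ {x' | 0 ≤ x' 0}) ∪ (A ∩ {x' | x' 0 ≤ 0}) := by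
    intro x hx
    rcases le_total 0 (x 0) with h | h
    · exact Or.inl ⟨hx, h⟩
    · exact Or.inr ⟨hx, h⟩
  calc μH[(0:ℝ)] A ≤ μH[(0:ℝ)] ((A ∩ {x' | 0 ≤ x' 0}) ∪ (A ∩ {x' | x' 0 ≤ 0})) :=
        measure_mono hcover
    _ ≤ μH[(0:ℝ)] (A ∩ {x' | 0 ≤ x' 0}) + μH[(0:ℝ)] (A ∩ {x' | x' 0 ≤ 0}) :=
        measure_union_le _ _
    _ ≤ 1 + 1 := add_le_add
        (MeasureTheory.Measure.hausdorffMeasure_le_one_of_subsingleton hP le_rfl)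
        (MeasureTheory.Measure.hausdorffMeasure_le_one_of_subsingleton hN le_rfl)
    _ = 2 := by norm_num

def ecirc (θ : ℝ) : Euc 2 := WithLp.toLp 2 (fun i => if i = 0 then Real.cos θ else Real.sin θ)

lemma ecirc_apply0 (θ : ℝ) : ecirc θ 0 = Real.cos θ := by simp [ecirc]

lemma ecirc_apply1 (θ : ℝ) : ecirc θ 1 = Real.sin θ := by simp [ecirc]

lemma euc2_norm (x : Euc 2) : ‖x‖ = Real.sqrt ((x 0)^2 + (x 1)^2) := by
  rw [EuclideanSpace.norm_eq]
  simp [Fin.sum_univ_two, Real.norm_eq_abs, sq_abs]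

lemma ecirc_norm (θ : ℝ) : ‖ecirc θ‖ = 1 := by
  rw [euc2_norm, ecirc_apply0, ecirc_apply1, Real.cos_sq_add_sin_sq, Real.sqrt_one]

lemma abs_sin_sub_le (a b : ℝ) : |Real.sin a - Real.sin b| ≤ |a - b| := by
  have := Convex.norm_image_sub_le_of_norm_deriv_le (f := Real.sin) (C := 1)
    (fun x _ => (Real.hasDerivAt_sin x).differentiableAt)
    (fun x _ => by rw [Real.deriv_sin, Real.norm_eq_abs]; exact Real.abs_cos_le_one x)
    convex_univ (Set.mem_univ b) (Set.mem_univ a)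
  simpa using this

lemma abs_cos_sub_le (a b : ℝ) : |Real.cos a - Real.cos b| ≤ |a - b| := by
  have := Convex.norm_image_sub_le_of_norm_deriv_le (f := Real.cos) (C := 1)
    (fun x _ => (Real.hasDerivAt_cos x).differentiableAt)
    (fun x _ => by
      rw [Real.deriv_cos, Real.norm_eq_abs, abs_neg]; exact Real.abs_sin_le_one x)
    convex_univ (Set.mem_univ b) (Set.mem_univ a)
  simpa using this

lemma ecirc_lip (θ₁ θ₂ : ℝ) : ‖ecirc θ₁ - ecirc θ₂‖ ≤ 2 * |θ₁ - θ₂| := by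
  have h0 : (ecirc θ₁ - ecirc θ₂) 0 = Real.cos θ₁ - Real.cos θ₂ := by
    simp [ecirc]
  have h1 : (ecirc θ₁ - ecirc θ₂) 1 = Real.sin θ₁ - Real.sin θ₂ := by
    simp [ecirc]
  rw [euc2_norm, h0, h1]
  have hc := abs_cos_sub_le θ₁ θ₂
  have hs := abs_sin_sub_le θ₁ θ₂
  have hd : (0:ℝ) ≤ 2 * |θ₁ - θ₂| := by positivity
  rw [show (2 * |θ₁ - θ₂|) = Real.sqrt ((2 * |θ₁ - θ₂|)^2) from (Real.sqrt_sq hd).symm]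
  apply Real.sqrt_le_sqrt
  have h2 : (Real.cos θ₁ - Real.cos θ₂)^2 ≤ |θ₁ - θ₂|^2 := by
    rw [← sq_abs (Real.cos θ₁ - Real.cos θ₂)]
    exact pow_le_pow_left₀ (abs_nonneg _) hc 2
  have h3 : (Real.sin θ₁ - Real.sin θ₂)^2 ≤ |θ₁ - θ₂|^2 := by
    rw [← sq_abs (Real.sin θ₁ - Real.sin θ₂)]
    exact pow_le_pow_left₀ (abs_nonneg _) hs 2
  nlinarith [abs_nonneg (θ₁ - θ₂)]

lemma polar_rep (x : Euc 2) (hx : x ≠ 0) : ∃ θ ∈ Set.Icc (-π) π, x = ‖x‖ • ecirc θ := by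
  set z : ℂ := ⟨x 0, x 1⟩ with hz
  have hz0 : z ≠ 0 := by
    intro h
    apply hx
    have h0 : x 0 = 0 := congrArg Complex.re h
    have h1 : x 1 = 0 := congrArg Complex.im h
    ext i
    fin_cases i
    · exact h0
    · exact h1
  have habs : ‖z‖ = ‖x‖ := by
    rw [Complex.norm_def, Complex.normSq_apply, euc2_norm]
    norm_num [hz]
    ring_nf
  have habs0 : ‖z‖ ≠ 0 := by
    simpa using (norm_ne_zero_iff.mpr hz0)
  refine ⟨Complex.arg z, ⟨(Complex.arg_mem_Ioc z).1.le, (Complex.arg_mem_Ioc z).2⟩, ?_⟩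
  ext i
  fin_cases i
  · show x 0 = ‖x‖ * (ecirc (Complex.arg z)) 0
    rw [ecirc_apply0, Complex.cos_arg hz0, ← habs]
    field_simp
    rfl
  · show x 1 = ‖x‖ * (ecirc (Complex.arg z)) 1
    rw [ecirc_apply1, Complex.sin_arg, ← habs]
    field_simp
    rfl

lemma measure_A_le_n3 {η : Euc 2 → ℝ} (hη : ContDiff ℝ 1 η) {ε C M : ℝ}
    (hε : 0 < ε) (hC : 0 < C) (hM0 : 0 ≤ M) (hM : ∀ x', |η x'| ≤ M)
    (hdecay : ∀ y : Euc 2, 1 ≤ ‖y‖ → ‖gradient η y‖ ≤ C * ‖y‖ ^ (-(1+ε)))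
    {r : ℝ} (hrbig : 2 + M*C + M + 2 ≤ r)
    (hr : ∀ x' : Euc 2, ‖x'‖^2 + η x'^2 = r^2 → 2 + M*C ≤ ‖x'‖) :
    μH[(1:ℝ)] {x' : Euc 2 | ‖x'‖^2 + η x'^2 = r^2}
      ≤ ENNReal.ofReal ((6*r + 4*M*C) * (2*π)) := by
  have hMC : 0 ≤ M*C := mul_nonneg hM0 hC.le
  set t₀ : ℝ := 2 + M*C with ht₀def
  have ht₀2 : (2:ℝ) ≤ t₀ := by rw [ht₀def]; linarith
  have ht₀pos : (0:ℝ) < t₀ := by linarith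
  have ht₀r : t₀ ≤ r := by rw [ht₀def]; linarith
  have hrpos : (0:ℝ) < r := lt_of_lt_of_le ht₀pos ht₀r
  -- existence of the radial solution
  have hex : ∀ θ : ℝ, ∃ t, t ∈ Set.Icc t₀ r ∧ t^2 + η (t • ecirc θ)^2 = r^2 := by
    intro θ
    have hc : Continuous fun t : ℝ => η (t • ecirc θ) :=
      hη.continuous.comp (continuous_id.smul continuous_const)
    have hcont : ContinuousOn (fun t : ℝ => t^2 + η (t • ecirc θ)^2) (Set.Icc t₀ r) :=
      ((continuous_pow 2).add (hc.pow 2)).continuousOn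
    have hmem : r^2 ∈ Set.Icc (t₀^2 + η (t₀ • ecirc θ)^2) (r^2 + η (r • ecirc θ)^2) := by
      constructor
      · have h1 := hM (t₀ • ecirc θ)
        have h2 := abs_nonneg (η (t₀ • ecirc θ))
        nlinarith [sq_abs (η (t₀ • ecirc θ))]
      · nlinarith [sq_nonneg (η (r • ecirc θ))]
    obtain ⟨t, htmem, hteq⟩ := intermediate_value_Icc ht₀r hcont hmem
    exact ⟨t, htmem, hteq⟩
  choose ρ hρ using hex
  have hρmem : ∀ θ, ρ θ ∈ Set.Icc t₀ r := fun θ => (hρ θ).1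
  have hρeq : ∀ θ, (ρ θ)^2 + η (ρ θ • ecirc θ)^2 = r^2 := fun θ => (hρ θ).2
  -- the ordered Lipschitz estimate
  have haux : ∀ θ₁ θ₂ : ℝ, ρ θ₁ ≤ ρ θ₂ → ρ θ₂ - ρ θ₁ ≤ (4*r + 4*M*C) * |θ₁ - θ₂| := by
    intro θ₁ θ₂ hle
    rcases le_or_gt (1/4 : ℝ) |θ₁ - θ₂| with hbig | hsmall
    · have h1 := (hρmem θ₁).1
      have h2 := (hρmem θ₂).2
      nlinarith [abs_nonneg (θ₁ - θ₂)]
    · have hρ₁t₀ : t₀ ≤ ρ θ₁ := (hρmem θ₁).1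
      have hρ₁pos : 0 < ρ θ₁ := lt_of_lt_of_le ht₀pos hρ₁t₀
      -- norms on the segment
      have hseg : ∀ y ∈ segment ℝ (ρ θ₁ • ecirc θ₁) (ρ θ₁ • ecirc θ₂), ρ θ₁ / 2 ≤ ‖y‖ := by
        intro y hy
        rw [segment_eq_image'] at hy
        obtain ⟨s, hs, rfl⟩ := hy
        have hdiff : ‖ρ θ₁ • ecirc θ₂ - ρ θ₁ • ecirc θ₁‖ ≤ ρ θ₁ * (2 * |θ₁ - θ₂|) := by
          rw [← smul_sub, norm_smul, Real.norm_eq_abs, abs_of_pos hρ₁pos]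
          have := ecirc_lip θ₂ θ₁
          rw [abs_sub_comm θ₂ θ₁] at this
          exact mul_le_mul_of_nonneg_left this hρ₁pos.le
        have hnorm1 : ‖ρ θ₁ • ecirc θ₁‖ = ρ θ₁ := by
          rw [norm_smul, ecirc_norm, mul_one, Real.norm_eq_abs, abs_of_pos hρ₁pos]
        calc ρ θ₁ / 2 ≤ ρ θ₁ - 1 * (ρ θ₁ * (2 * |θ₁ - θ₂|)) := by nlinarith [abs_nonneg (θ₁ - θ₂)]
          _ ≤ ρ θ₁ - s * ‖ρ θ₁ • ecirc θ₂ - ρ θ₁ • ecirc θ₁‖ := by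
              have h0 : 0 ≤ ‖ρ θ₁ • ecirc θ₂ - ρ θ₁ • ecirc θ₁‖ := norm_nonneg _
              have hs1 : s ≤ 1 := hs.2
              have hs0 : 0 ≤ s := hs.1
              nlinarith
          _ ≤ ρ θ₁ - ‖s • (ρ θ₁ • ecirc θ₂ - ρ θ₁ • ecirc θ₁)‖ := by
              rw [norm_smul, Real.norm_eq_abs, abs_of_nonneg hs.1]
          _ ≤ ‖ρ θ₁ • ecirc θ₁ + s • (ρ θ₁ • ecirc θ₂ - ρ θ₁ • ecirc θ₁)‖ := by
              have h := norm_sub_le (ρ θ₁ • ecirc θ₁ + s • (ρ θ₁ • ecirc θ₂ - ρ θ₁ • ecirc θ₁))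
                (s • (ρ θ₁ • ecirc θ₂ - ρ θ₁ • ecirc θ₁))
              simp only [add_sub_cancel_right] at h
              rw [hnorm1] at h
              linarith
      -- MVT bound for η on the segment
      have hmvt : ‖η (ρ θ₁ • ecirc θ₂) - η (ρ θ₁ • ecirc θ₁)‖
          ≤ (2*C/ρ θ₁) * ‖ρ θ₁ • ecirc θ₂ - ρ θ₁ • ecirc θ₁‖ := by
        apply Convex.norm_image_sub_le_of_norm_fderiv_le
          (fun y _ => hη.differentiable one_ne_zero y) _ (convex_segment _ _)
          (left_mem_segment ℝ _ _) (right_mem_segment ℝ _ _)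
        intro y hy
        have hy2 : ρ θ₁ / 2 ≤ ‖y‖ := hseg y hy
        have hy1 : (1:ℝ) ≤ ‖y‖ := le_trans (by linarith) hy2
        rw [norm_gradient_eq]
        calc ‖gradient η y‖ ≤ C * ‖y‖ ^ (-(1+ε)) := hdecay y hy1
          _ ≤ C * ‖y‖ ^ (-(1:ℝ)) := mul_le_mul_of_nonneg_left
              (Real.rpow_le_rpow_of_exponent_le hy1 (by linarith)) hC.le
          _ = C / ‖y‖ := by rw [Real.rpow_neg_one]; ring
          _ ≤ 2*C/ρ θ₁ := by
              rw [div_le_div_iff₀ (by linarith) hρ₁pos]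
              nlinarith
      have hdiffnorm : ‖ρ θ₁ • ecirc θ₂ - ρ θ₁ • ecirc θ₁‖ ≤ ρ θ₁ * (2 * |θ₁ - θ₂|) := by
        rw [← smul_sub, norm_smul, Real.norm_eq_abs, abs_of_pos hρ₁pos]
        have := ecirc_lip θ₂ θ₁
        rw [abs_sub_comm θ₂ θ₁] at this
        exact mul_le_mul_of_nonneg_left this hρ₁pos.le
      have hetadiff : |η (ρ θ₁ • ecirc θ₂) - η (ρ θ₁ • ecirc θ₁)| ≤ 4*C*|θ₁ - θ₂| := by
        rw [← Real.norm_eq_abs]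
        calc ‖η (ρ θ₁ • ecirc θ₂) - η (ρ θ₁ • ecirc θ₁)‖
            ≤ (2*C/ρ θ₁) * ‖ρ θ₁ • ecirc θ₂ - ρ θ₁ • ecirc θ₁‖ := hmvt
          _ ≤ (2*C/ρ θ₁) * (ρ θ₁ * (2 * |θ₁ - θ₂|)) := by
              apply mul_le_mul_of_nonneg_left hdiffnorm (by positivity)
          _ = 4*C*|θ₁ - θ₂| := by field_simp; ring
      -- growth along direction θ₂
      have hgrow := ray_growth hη hC hε hM0 hM hdecay (ecirc_norm θ₂) hρ₁t₀ hle
      rw [hρeq θ₂] at hgrow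
      have hkey : t₀ * (ρ θ₂ - ρ θ₁)
          ≤ η (ρ θ₁ • ecirc θ₁)^2 - η (ρ θ₁ • ecirc θ₂)^2 := by
        have := hρeq θ₁
        nlinarith
      have hsub : |η (ρ θ₁ • ecirc θ₁) - η (ρ θ₁ • ecirc θ₂)| ≤ 4*C*|θ₁ - θ₂| := by
        rw [abs_sub_comm]
        exact hetadiff
      have hsum : |η (ρ θ₁ • ecirc θ₁) + η (ρ θ₁ • ecirc θ₂)| ≤ 2*M := by
        have h1 := hM (ρ θ₁ • ecirc θ₁)
        have h2 := hM (ρ θ₁ • ecirc θ₂)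
        have h3 := abs_add_le (η (ρ θ₁ • ecirc θ₁)) (η (ρ θ₁ • ecirc θ₂))
        linarith
      have hsq : η (ρ θ₁ • ecirc θ₁)^2 - η (ρ θ₁ • ecirc θ₂)^2 ≤ 2*M * (4*C*|θ₁ - θ₂|) := by
        calc η (ρ θ₁ • ecirc θ₁)^2 - η (ρ θ₁ • ecirc θ₂)^2
            = (η (ρ θ₁ • ecirc θ₁) - η (ρ θ₁ • ecirc θ₂))
              * (η (ρ θ₁ • ecirc θ₁) + η (ρ θ₁ • ecirc θ₂)) := by ring
          _ ≤ |(η (ρ θ₁ • ecirc θ₁) - η (ρ θ₁ • ecirc θ₂))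
              * (η (ρ θ₁ • ecirc θ₁) + η (ρ θ₁ • ecirc θ₂))| := le_abs_self _
          _ = |η (ρ θ₁ • ecirc θ₁) - η (ρ θ₁ • ecirc θ₂)|
              * |η (ρ θ₁ • ecirc θ₁) + η (ρ θ₁ • ecirc θ₂)| := abs_mul _ _
          _ ≤ (4*C*|θ₁ - θ₂|) * (2*M) :=
              mul_le_mul hsub hsum (abs_nonneg _) (by positivity)
          _ = 2*M * (4*C*|θ₁ - θ₂|) := by ring
      have habs := abs_nonneg (θ₁ - θ₂)
      have hchain : t₀ * (ρ θ₂ - ρ θ₁) ≤ 8*(M*C*|θ₁ - θ₂|) := by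
        calc t₀ * (ρ θ₂ - ρ θ₁) ≤ 2*M * (4*C*|θ₁ - θ₂|) := hkey.trans hsq
          _ = 8*(M*C*|θ₁ - θ₂|) := by ring
      have hmul : 2*(ρ θ₂ - ρ θ₁) ≤ t₀*(ρ θ₂ - ρ θ₁) :=
        mul_le_mul_of_nonneg_right ht₀2 (by linarith)
      have hr4 : 0 ≤ 4*(r*|θ₁ - θ₂|) := by positivity
      calc ρ θ₂ - ρ θ₁ ≤ 4*(M*C*|θ₁ - θ₂|) + 4*(r*|θ₁ - θ₂|) := by linarith
        _ = (4*r + 4*M*C) * |θ₁ - θ₂| := by ring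
  have hρlip : ∀ θ₁ θ₂, |ρ θ₁ - ρ θ₂| ≤ (4*r + 4*M*C) * |θ₁ - θ₂| := by
    intro θ₁ θ₂
    rcases le_total (ρ θ₁) (ρ θ₂) with h | h
    · rw [abs_sub_comm, abs_of_nonneg (by linarith)]
      exact haux θ₁ θ₂ h
    · rw [abs_of_nonneg (by linarith)]
      have := haux θ₂ θ₁ h
      rwa [abs_sub_comm] at this
  -- the curve map is Lipschitz
  set L : ℝ := 6*r + 4*M*C with hLdef
  have hL0 : 0 ≤ L := by positivity
  have hLip : LipschitzWith (Real.toNNReal L) (fun θ => ρ θ • ecirc θ) := by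
    apply LipschitzWith.of_dist_le_mul
    intro θ₁ θ₂
    rw [Real.coe_toNNReal _ hL0, dist_eq_norm, Real.dist_eq]
    have hdecomp : ρ θ₁ • ecirc θ₁ - ρ θ₂ • ecirc θ₂
        = (ρ θ₁ - ρ θ₂) • ecirc θ₁ + ρ θ₂ • (ecirc θ₁ - ecirc θ₂) := by
      rw [sub_smul, smul_sub]
      abel
    calc ‖ρ θ₁ • ecirc θ₁ - ρ θ₂ • ecirc θ₂‖
        ≤ ‖(ρ θ₁ - ρ θ₂) • ecirc θ₁‖ + ‖ρ θ₂ • (ecirc θ₁ - ecirc θ₂)‖ := by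
          rw [hdecomp]; exact norm_add_le _ _
      _ ≤ |ρ θ₁ - ρ θ₂| * 1 + |ρ θ₂| * (2 * |θ₁ - θ₂|) := by
          rw [norm_smul, norm_smul, ecirc_norm, Real.norm_eq_abs, Real.norm_eq_abs]
          exact add_le_add le_rfl (mul_le_mul_of_nonneg_left (ecirc_lip θ₁ θ₂) (abs_nonneg _))
      _ ≤ L * |θ₁ - θ₂| := by
          have h1 := hρlip θ₁ θ₂
          have h2 : |ρ θ₂| ≤ r := by
            rw [abs_of_pos (lt_of_lt_of_le ht₀pos (hρmem θ₂).1)]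
            exact (hρmem θ₂).2
          have h3 : |ρ θ₂| * (2 * |θ₁ - θ₂|) ≤ r * (2 * |θ₁ - θ₂|) :=
            mul_le_mul_of_nonneg_right h2 (by positivity)
          have h4 : (4*r + 4*M*C) * |θ₁ - θ₂| + r * (2 * |θ₁ - θ₂|) = L * |θ₁ - θ₂| := by
            rw [hLdef]; ring
          linarith
  -- covering the set by the curve
  have hcover : {x' : Euc 2 | ‖x'‖^2 + η x'^2 = r^2}
      ⊆ (fun θ => ρ θ • ecirc θ) '' Set.Icc (-π) π := by
    intro x hx
    have hx' : ‖x‖^2 + η x^2 = r^2 := hx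
    have hxt₀ : t₀ ≤ ‖x‖ := hr x hx'
    have hx0 : x ≠ 0 := by
      intro h
      rw [h, norm_zero] at hxt₀
      linarith
    obtain ⟨θ, hθIcc, hxe⟩ := polar_rep x hx0
    have h1 : ‖x‖^2 + η (‖x‖ • ecirc θ)^2 = r^2 := by rw [← hxe]; exact hx'
    have h2 : ρ θ = ‖x‖ := by
      apply ray_unique hη hC hε hM0 hM hdecay (ecirc_norm θ) (hρmem θ).1 hxt₀
      rw [hρeq θ, h1]
    exact ⟨θ, hθIcc, by show ρ θ • ecirc θ = x; rw [h2]; exact hxe.symm⟩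
  -- combine
  calc μH[(1:ℝ)] {x' : Euc 2 | ‖x'‖^2 + η x'^2 = r^2}
      ≤ μH[(1:ℝ)] ((fun θ => ρ θ • ecirc θ) '' Set.Icc (-π) π) := measure_mono hcover
    _ ≤ ((Real.toNNReal L : NNReal) : ENNReal) ^ (1:ℝ) * μH[(1:ℝ)] (Set.Icc (-π) π) :=
        hLip.hausdorffMeasure_image_le zero_le_one _
    _ = ENNReal.ofReal L * volume (Set.Icc (-π) π) := by
        rw [ENNReal.rpow_one, MeasureTheory.hausdorffMeasure_real]
        rfl
    _ = ENNReal.ofReal L * ENNReal.ofReal (2*π) := by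
        rw [Real.volume_Icc]
        congr 1
        ring
    _ = ENNReal.ofReal (L * (2*π)) := (ENNReal.ofReal_mul hL0).symm
    _ = ENNReal.ofReal ((6*r + 4*M*C) * (2*π)) := by rw [hLdef]

lemma setIntegral_abs_bound {m : ℕ} {d : ℝ} (f : Euc m → ℝ) {A : Set (Euc m)}
    (hA : MeasurableSet A) {c B : ℝ} (hc : 0 ≤ c) (hB : 0 ≤ B)
    (hf : ∀ x ∈ A, |f x| ≤ c) (hμ : μH[d] A ≤ ENNReal.ofReal B) :
    |∫ x in A, f x ∂μH[d]| ≤ c * B := by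
  rw [← Real.norm_eq_abs]
  refine (MeasureTheory.norm_integral_le_lintegral_norm _).trans ?_
  have h1 : ∫⁻ x in A, ENNReal.ofReal ‖f x‖ ∂μH[d] ≤ ENNReal.ofReal (c * B) := by
    calc ∫⁻ x in A, ENNReal.ofReal ‖f x‖ ∂μH[d]
        ≤ ∫⁻ _ in A, ENNReal.ofReal c ∂μH[d] := by
          apply MeasureTheory.setLIntegral_mono' hA
          intro x hx
          exact ENNReal.ofReal_le_ofReal (by rw [Real.norm_eq_abs]; exact hf x hx)
      _ = ENNReal.ofReal c * μH[d] A := MeasureTheory.setLIntegral_const A _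
      _ ≤ ENNReal.ofReal c * ENNReal.ofReal B := mul_le_mul_right hμ _
      _ = ENNReal.ofReal (c * B) := (ENNReal.ofReal_mul hc).symm
  exact ENNReal.toReal_le_of_le_ofReal (by positivity) h1

lemma integrand_abs_le {m : ℕ} (η : Euc m → ℝ) (x' : Euc m) :
    |(inner ℝ (-(Real.sqrt (1 + ‖gradient η x'‖ ^ 2))⁻¹ • gradient η x')
      ((‖x' + η x' • gradient η x'‖)⁻¹ • (x' + η x' • gradient η x')) : ℝ)|
      ≤ ‖gradient η x'‖ := by
  set g := gradient η x' with hg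
  set v := x' + η x' • g with hv
  have hs : 1 ≤ Real.sqrt (1 + ‖g‖ ^ 2) := by
    have h1 : (1:ℝ) ≤ 1 + ‖g‖^2 := by nlinarith [sq_nonneg ‖g‖]
    have := Real.sqrt_le_sqrt h1
    rwa [Real.sqrt_one] at this
  have h1 : ‖-(Real.sqrt (1 + ‖g‖ ^ 2))⁻¹ • g‖ ≤ ‖g‖ := by
    rw [norm_smul, Real.norm_eq_abs, abs_neg, abs_inv,
      abs_of_nonneg (Real.sqrt_nonneg _)]
    have h2 : (Real.sqrt (1 + ‖g‖ ^ 2))⁻¹ ≤ 1 := inv_le_one_of_one_le₀ hs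
    have h3 : 0 ≤ (Real.sqrt (1 + ‖g‖ ^ 2))⁻¹ := by positivity
    nlinarith [norm_nonneg g]
  have h2 : ‖(‖v‖)⁻¹ • v‖ ≤ 1 := by
    rcases eq_or_ne v 0 with h | h
    · simp [h]
    · rw [norm_smul, Real.norm_eq_abs, abs_inv, abs_of_nonneg (norm_nonneg v),
        inv_mul_cancel₀ (norm_ne_zero_iff.2 h)]
  calc |(inner ℝ (-(Real.sqrt (1 + ‖g‖ ^ 2))⁻¹ • g) ((‖v‖)⁻¹ • v) : ℝ)|
      ≤ ‖-(Real.sqrt (1 + ‖g‖ ^ 2))⁻¹ • g‖ * ‖(‖v‖)⁻¹ • v‖ := abs_real_inner_le_norm _ _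
    _ ≤ ‖g‖ * 1 := mul_le_mul h1 h2 (norm_nonneg _) (norm_nonneg _)
    _ = ‖g‖ := mul_one _

lemma le_of_sq_le_sq' {a b : ℝ} (ha : 0 ≤ a) (hb : 0 ≤ b) (h : a^2 ≤ b^2) : a ≤ b := by
  nlinarith

/-- The boundary flux term `∫_{∂B_r ∩ S} n·ν ds` tends to zero as `r → ∞`. -/
theorem normal_flux_tendsto_zero {n : ℕ} (hn : n = 2 ∨ n = 3) (ε C : ℝ)
    (hε : 0 < ε) (hC : 0 < C) (η : Euc (n - 1) → ℝ) (hη : ContDiff ℝ 1 η)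
    (hdecay : ∀ x', 1 ≤ ‖x'‖ → ‖gradient η x'‖ ≤ C * ‖x'‖ ^ (-((n : ℝ) + ε))) :
    Tendsto (fun r : ℝ =>
      ∫ x' in {x' : Euc (n - 1) | ‖x'‖ ^ 2 + (η x') ^ 2 = r ^ 2},
        (inner ℝ (-(Real.sqrt (1 + ‖gradient η x'‖ ^ 2))⁻¹ • gradient η x')
          ((‖x' + η x' • gradient η x'‖)⁻¹ • (x' + η x' • gradient η x')) : ℝ)
        ∂μH[(n : ℝ) - 2]) atTop (nhds 0) := by
  rcases hn with hn | hn
  · subst hn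
    have hd0 : ((2:ℕ):ℝ) - 2 = 0 := by norm_num
    simp only [hd0]
    set ε' : ℝ := 1 + ε with hε'def
    have hε' : 0 < ε' := by positivity
    have hdecay' : ∀ y : Euc (2-1), 1 ≤ ‖y‖ → ‖gradient η y‖ ≤ C * ‖y‖ ^ (-(1+ε')) := by
      intro y hy
      have h := hdecay y hy
      have he : -(((2:ℕ):ℝ) + ε) = -(1+ε') := by rw [hε'def]; push_cast; ring
      rwa [he] at h
    obtain ⟨M, hMpos, hM⟩ := eta_bdd hε' hC hη hdecay'
    have hMC : 0 ≤ M*C := mul_nonneg hMpos.le hC.le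
    apply squeeze_zero_norm' (a := fun r : ℝ => (2*C*2^((2:ℝ)+ε)) * r ^ (-(2+ε)))
    · filter_upwards [Filter.eventually_ge_atTop (2*M + 2*M*C + 10)] with r hrR
      have hr0 : (0:ℝ) < r := by linarith
      set A := {x' : Euc (2-1) | ‖x'‖ ^ 2 + (η x') ^ 2 = r ^ 2} with hA
      have hlow : ∀ x' : Euc (2-1), x' ∈ A → r/2 ≤ ‖x'‖ ∧ 2 + M*C ≤ ‖x'‖ := by
        intro x' hx
        have hx' : ‖x'‖ ^ 2 + (η x') ^ 2 = r ^ 2 := hx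
        have hb := hM x'
        have hle : η x'^2 ≤ M^2 := by
          nlinarith [le_abs_self (η x'), neg_abs_le (η x'), abs_nonneg (η x')]
        constructor
        · apply le_of_sq_le_sq' (by linarith) (norm_nonneg x')
          nlinarith
        · apply le_of_sq_le_sq' (by linarith) (norm_nonneg x')
          nlinarith
      have hAmeas : MeasurableSet A :=
        (isClosed_eq ((continuous_norm.pow 2).add (hη.continuous.pow 2))
          continuous_const).measurableSet
      have hμ2 : μH[(0:ℝ)] A ≤ ENNReal.ofReal 2 := by
        have h := measure_A_le_two hη hε' hC hMpos.le hM hdecay'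
          (fun x' hx => (hlow x' hx).2)
        rwa [show (ENNReal.ofReal 2) = 2 by norm_num]
      have hc0 : 0 ≤ C * (r/2) ^ (-(1+ε')) := by positivity
      have hpt : ∀ x' ∈ A, |(inner ℝ (-(Real.sqrt (1 + ‖gradient η x'‖ ^ 2))⁻¹ • gradient η x')
          ((‖x' + η x' • gradient η x'‖)⁻¹ • (x' + η x' • gradient η x')) : ℝ)|
          ≤ C * (r/2) ^ (-(1+ε')) := by
        intro x' hx
        refine (integrand_abs_le η x').trans ?_
        have h1 : 1 ≤ ‖x'‖ := le_trans (by linarith) (hlow x' hx).1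
        refine (hdecay' x' h1).trans ?_
        exact mul_le_mul_of_nonneg_left
          (Real.rpow_le_rpow_of_nonpos (by linarith) (hlow x' hx).1 (by linarith)) hC.le
      have hbnd := setIntegral_abs_bound _ hAmeas hc0 (by norm_num) hpt hμ2
      rw [Real.norm_eq_abs]
      refine hbnd.trans ?_
      have hexp : -(1+ε') = -(2+ε) := by rw [hε'def]; ring
      rw [hexp]
      have hsplit : (r/2) ^ (-(2+ε)) = r ^ (-(2+ε)) * 2 ^ ((2:ℝ)+ε) := by
        rw [Real.div_rpow hr0.le (by norm_num : (0:ℝ) ≤ 2),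
          Real.rpow_neg (by norm_num : (0:ℝ) ≤ 2), div_eq_mul_inv, inv_inv]
      rw [hsplit]
      apply le_of_eq
      ring
    · have h := (tendsto_rpow_neg_atTop (show (0:ℝ) < 2+ε by linarith)).const_mul
        (2*C*2^((2:ℝ)+ε))
      simpa using h
  · subst hn
    have hd1 : ((3:ℕ):ℝ) - 2 = 1 := by norm_num
    simp only [hd1]
    set ε' : ℝ := 2 + ε with hε'def
    have hε' : 0 < ε' := by positivity
    have hdecay' : ∀ y : Euc (3-1), 1 ≤ ‖y‖ → ‖gradient η y‖ ≤ C * ‖y‖ ^ (-(1+ε')) := by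
      intro y hy
      have h := hdecay y hy
      have he : -(((3:ℕ):ℝ) + ε) = -(1+ε') := by rw [hε'def]; push_cast; ring
      rwa [he] at h
    obtain ⟨M, hMpos, hM⟩ := eta_bdd hε' hC hη hdecay'
    have hMC : 0 ≤ M*C := mul_nonneg hMpos.le hC.le
    have hπ := Real.pi_pos
    apply squeeze_zero_norm' (a := fun r : ℝ => (C*2^((3:ℝ)+ε)*(20*π)) * r ^ (-(2+ε)))
    · filter_upwards [Filter.eventually_ge_atTop (2*M + 2*M*C + 10)] with r hrR
      have hr0 : (0:ℝ) < r := by linarith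
      set A := {x' : Euc (3-1) | ‖x'‖ ^ 2 + (η x') ^ 2 = r ^ 2} with hA
      have hlow : ∀ x' : Euc (3-1), x' ∈ A → r/2 ≤ ‖x'‖ ∧ 2 + M*C ≤ ‖x'‖ := by
        intro x' hx
        have hx' : ‖x'‖ ^ 2 + (η x') ^ 2 = r ^ 2 := hx
        have hb := hM x'
        have hle : η x'^2 ≤ M^2 := by
          nlinarith [le_abs_self (η x'), neg_abs_le (η x'), abs_nonneg (η x')]
        constructor
        · apply le_of_sq_le_sq' (by linarith) (norm_nonneg x')
          nlinarith
        · apply le_of_sq_le_sq' (by linarith) (norm_nonneg x')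
          nlinarith
      have hAmeas : MeasurableSet A :=
        (isClosed_eq ((continuous_norm.pow 2).add (hη.continuous.pow 2))
          continuous_const).measurableSet
      have hμ3 : μH[(1:ℝ)] A ≤ ENNReal.ofReal ((6*r + 4*M*C) * (2*π)) :=
        measure_A_le_n3 hη hε' hC hMpos.le hM hdecay' (by linarith)
          (fun x' hx => (hlow x' hx).2)
      have hc0 : 0 ≤ C * (r/2) ^ (-(1+ε')) := by positivity
      have hB0 : 0 ≤ (6*r + 4*M*C) * (2*π) := by positivity
      have hpt : ∀ x' ∈ A, |(inner ℝ (-(Real.sqrt (1 + ‖gradient η x'‖ ^ 2))⁻¹ • gradient η x')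
          ((‖x' + η x' • gradient η x'‖)⁻¹ • (x' + η x' • gradient η x')) : ℝ)|
          ≤ C * (r/2) ^ (-(1+ε')) := by
        intro x' hx
        refine (integrand_abs_le η x').trans ?_
        have h1 : 1 ≤ ‖x'‖ := le_trans (by linarith) (hlow x' hx).1
        refine (hdecay' x' h1).trans ?_
        exact mul_le_mul_of_nonneg_left
          (Real.rpow_le_rpow_of_nonpos (by linarith) (hlow x' hx).1 (by linarith)) hC.le
      have hbnd := setIntegral_abs_bound _ hAmeas hc0 hB0 hpt hμ3
      rw [Real.norm_eq_abs]
      refine hbnd.trans ?_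
      have hexp : -(1+ε') = -(3+ε) := by rw [hε'def]; ring
      rw [hexp]
      have hsplit : (r/2) ^ (-(3+ε)) = r ^ (-(3+ε)) * 2 ^ ((3:ℝ)+ε) := by
        rw [Real.div_rpow hr0.le (by norm_num : (0:ℝ) ≤ 2),
          Real.rpow_neg (by norm_num : (0:ℝ) ≤ 2), div_eq_mul_inv, inv_inv]
      have h5 : r ^ (-(2+ε)) = r ^ (-(3+ε)) * r := by
        rw [show -(2+ε) = -(3+ε) + 1 by ring, Real.rpow_add hr0, Real.rpow_one]
      calc C * (r/2) ^ (-(3+ε)) * ((6*r + 4*M*C) * (2*π))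
          ≤ C * (r/2) ^ (-(3+ε)) * ((10*r) * (2*π)) := by
            have h6 : 6*r + 4*M*C ≤ 10*r := by nlinarith
            have h7 : 0 ≤ C * (r/2) ^ (-(3+ε)) := by positivity
            have h8 : (6*r + 4*M*C) * (2*π) ≤ (10*r) * (2*π) := by nlinarith
            exact mul_le_mul_of_nonneg_left h8 h7
        _ = (C*2^((3:ℝ)+ε)*(20*π)) * r ^ (-(2+ε)) := by
            rw [hsplit, h5]
            ring
    · have h := (tendsto_rpow_neg_atTop (show (0:ℝ) < 2+ε by linarith)).const_mul
        (C*2^((3:ℝ)+ε)*(20*π))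
      simpa using h
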